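/- arXiv:math/0502075 — 5 statements merged into one kernel-verified Lean document; each statement's English description precedes it below -/
import Mathlib

section
/- In any pregroupoid, the fraction identity (x₁x₂⁻¹x₃)x₄⁻¹ = x₁(x₄x₃⁻¹x₂)⁻¹ holds in XX⁻¹: i.e. the horizontal pairs (x₄, x₁x₂⁻¹x₃) and (x₄x₃⁻¹x₂, x₁) are ≅ₕ-equivalent, whenever the book-keeping conditions β(x₁)=β(x₂), α(x₂)=α(x₃), β(x₃)=β(x₄) hold. Equivalently, x₁ = (x₁x₂⁻¹x₃)x₄⁻¹(x₄x₃⁻¹x₂). -/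
namespace Kock

/-- A pregroupoid on `A`, `B`: an inhabited type `X` with surjections `α`, `β` and a
partial ternary operation `op y x z` (meaning `y x⁻¹ z`), defined whenever
`β x = β y` and `α x = α z`; partiality is encoded by proof arguments, and the
axioms are quantified over all proofs of the book-keeping conditions. -/
structure Pregroupoid (A B X : Type*) : Type _ where
  α : X → A
  β : X → B
  nonempty : Nonempty X
  α_surj : Function.Surjective α
  β_surj : Function.Surjective β
  op : (y x z : X) → β x = β y → α x = α z → X
  α_op : ∀ (y x z : X) (h1 : β x = β y) (h2 : α x = α z), α (op y x z h1 h2) = α y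
  β_op : ∀ (y x z : X) (h1 : β x = β y) (h2 : α x = α z), β (op y x z h1 h2) = β z
  U1 : ∀ (x z : X) (h1 : β x = β x) (h2 : α x = α z), op x x z h1 h2 = z
  U2 : ∀ (y x : X) (h1 : β x = β y) (h2 : α x = α x), op y x x h1 h2 = y
  G1 : ∀ (v y x z : X) (h1 : β x = β y) (h2 : α x = α z) (h3 : β y = β v)
      (h4 : α y = α (op y x z h1 h2)) (h5 : β x = β v),
      op v y (op y x z h1 h2) h3 h4 = op v x z h5 h2
  G2 : ∀ (y x z w : X) (h1 : β x = β y) (h2 : α x = α z)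
      (h3 : β z = β (op y x z h1 h2)) (h4 : α z = α w) (h5 : α x = α w),
      op (op y x z h1 h2) z w h3 h4 = op y x w h1 h5


/-- Horizontal pairs: pairs `(x, y)` with `β x = β y`. -/
def HPair {A B X : Type*} (P : Pregroupoid A B X) : Type _ :=
  {p : X × X // P.β p.1 = P.β p.2}

/-- The relation `(x, y) ≅ₕ (z, u)` iff `α x = α z` and `u = yx⁻¹z`;
its classes `yx⁻¹` form `XX⁻¹`. -/
def hRel {A B X : Type*} (P : Pregroupoid A B X) (p q : HPair P) : Prop :=
  ∃ h : P.α p.val.1 = P.α q.val.1,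
    q.val.2 = P.op p.val.2 p.val.1 q.val.1 p.prop h

/-- The fraction identity `(x₁x₂⁻¹x₃)x₄⁻¹ = x₁(x₄x₃⁻¹x₂)⁻¹`
holds in `XX⁻¹`: the horizontal pairs `(x₄, x₁x₂⁻¹x₃)` and `(x₄x₃⁻¹x₂, x₁)`
are `≅ₕ`-equivalent; equivalently, `x₁ = (x₁x₂⁻¹x₃)x₄⁻¹(x₄x₃⁻¹x₂)`. -/
theorem fraction_identity_right {A B X : Type*} (P : Pregroupoid A B X)
    (x1 x2 x3 x4 : X)
    (h1 : P.β x1 = P.β x2) (h2 : P.α x2 = P.α x3) (h3 : P.β x3 = P.β x4)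
    (ha : P.β x4 = P.β (P.op x1 x2 x3 h1.symm h2))
    (hb : P.α x4 = P.α (P.op x4 x3 x2 h3 h2.symm))
    (hc : P.β (P.op x4 x3 x2 h3 h2.symm) = P.β x1) :
    hRel P ⟨(x4, P.op x1 x2 x3 h1.symm h2), ha⟩
        ⟨(P.op x4 x3 x2 h3 h2.symm, x1), hc⟩ ∧
      x1 = P.op (P.op x1 x2 x3 h1.symm h2) x4 (P.op x4 x3 x2 h3 h2.symm)
        ha hb := by
  have key : P.op (P.op x1 x2 x3 h1.symm h2) x4 (P.op x4 x3 x2 h3 h2.symm) ha hb = x1 := by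
    rw [P.G1 (P.op x1 x2 x3 h1.symm h2) x4 x3 x2 h3 h2.symm ha hb
      (h3.trans ha)]
    rw [P.G2 x1 x2 x3 x2 h1.symm h2 (h3.trans ha) h2.symm rfl]
    exact P.U2 x1 x2 h1.symm rfl
  exact ⟨⟨hb, key.symm⟩, key.symm⟩

end Kock
end

section
/- In any pregroupoid, the fraction identity (x₄x₃⁻¹x₂)⁻¹x₅ = x₂⁻¹(x₃x₄⁻¹x₅) holds in X⁻¹X: i.e. the vertical pairs (x₄x₃⁻¹x₂, x₅) and (x₂, x₃x₄⁻¹x₅) are ≅ᵥ-equivalent, whenever the relevant book-keeping conditions hold. Equivalently, x₃x₄⁻¹x₅ = x₂(x₄x₃⁻¹x₂)⁻¹x₅. -/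
namespace Kock

/-- Vertical pairs: pairs `(x, z)` with `α x = α z`. -/
def VPair {A B X : Type*} (P : Pregroupoid A B X) : Type _ :=
  {p : X × X // P.α p.1 = P.α p.2}

/-- The relation `(x, z) ≅ᵥ (y, u)` iff `β x = β y` and `u = yx⁻¹z`;
its classes `x⁻¹z` form `X⁻¹X`. -/
def vRel {A B X : Type*} (P : Pregroupoid A B X) (p q : VPair P) : Prop :=
  ∃ h : P.β p.val.1 = P.β q.val.1,
    q.val.2 = P.op q.val.1 p.val.1 p.val.2 h p.prop


theorem op_congr1 {A B X : Type*} (P : Pregroupoid A B X) {y y' : X} (x z : X)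
    (h : y = y') (h1 : P.β x = P.β y) (h1' : P.β x = P.β y') (h2 : P.α x = P.α z) :
    P.op y x z h1 h2 = P.op y' x z h1' h2 := by subst h; rfl

/-- The fraction identity `(x₄x₃⁻¹x₂)⁻¹x₅ = x₂⁻¹(x₃x₄⁻¹x₅)`
holds in `X⁻¹X`: the vertical pairs `(x₄x₃⁻¹x₂, x₅)` and `(x₂, x₃x₄⁻¹x₅)`
are `≅ᵥ`-equivalent; equivalently, `x₃x₄⁻¹x₅ = x₂(x₄x₃⁻¹x₂)⁻¹x₅`. -/
theorem fraction_identity_left {A B X : Type*} (P : Pregroupoid A B X)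
    (x2 x3 x4 x5 : X)
    (h34 : P.β x3 = P.β x4) (h32 : P.α x3 = P.α x2) (h45 : P.α x4 = P.α x5)
    (hv : P.α (P.op x4 x3 x2 h34 h32) = P.α x5)
    (hb : P.β (P.op x4 x3 x2 h34 h32) = P.β x2)
    (hq : P.α x2 = P.α (P.op x3 x4 x5 h34.symm h45)) :
    vRel P ⟨(P.op x4 x3 x2 h34 h32, x5), hv⟩
        ⟨(x2, P.op x3 x4 x5 h34.symm h45), hq⟩ ∧
      P.op x3 x4 x5 h34.symm h45
        = P.op x2 (P.op x4 x3 x2 h34 h32) x5 hb hv := by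
  have hαp : P.α x4 = P.α (P.op x4 x3 x2 h34 h32) := by rw [P.α_op]
  have hx2 : P.op x3 x4 (P.op x4 x3 x2 h34 h32) h34.symm hαp = x2 := by
    rw [P.G1 x3 x4 x3 x2 h34 h32 h34.symm hαp rfl, P.U1]
  have hβp : P.β (P.op x4 x3 x2 h34 h32)
      = P.β (P.op x3 x4 (P.op x4 x3 x2 h34 h32) h34.symm hαp) := by rw [hx2]; exact hb
  have key : P.op x3 x4 x5 h34.symm h45
      = P.op x2 (P.op x4 x3 x2 h34 h32) x5 hb hv := by
    rw [← P.G2 x3 x4 (P.op x4 x3 x2 h34 h32) x5 h34.symm hαp hβp hv h45]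
    exact op_congr1 P _ _ hx2 _ hb hv
  exact ⟨⟨hb, key⟩, key⟩

end Kock
end

section
/- For any pregroupoid X on A, B, the enveloping groupoid X⁺ with objects A ⊔ B, whose hom-sets are X⁺(A,A) = XX⁻¹, X⁺(B,B) = X⁻¹X, X⁺(A,B) = X, X⁺(B,A) = X⁻¹ (a formal copy of X), with composition defined by the multiplication table (e.g. x₁x₂⁻¹ ∘ x₃x₄⁻¹ := (x₁x₂⁻¹x₃)x₄⁻¹, x₁x₂⁻¹ ∘ x₃ := x₁x₂⁻¹x₃, x₁ ∘ x₂⁻¹ := x₁x₂⁻¹, x₂⁻¹ ∘ x₃ := x₂⁻¹x₃, etc.), is a well-defined groupoid: composition is well defined on equivalence classes, associative, has identities (xx⁻¹ at α(x) and x⁻¹x at β(x)), and every arrow is invertible. -/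
namespace Kock

/-- `XX⁻¹`: fractions `yx⁻¹`, the classes of horizontal pairs. -/
def XXinv {A B X : Type*} (P : Pregroupoid A B X) : Type _ := Quot (hRel P)

/-- `X⁻¹X`: fractions `x⁻¹z`, the classes of vertical pairs. -/
def XinvX {A B X : Type*} (P : Pregroupoid A B X) : Type _ := Quot (vRel P)

/-- The arrows of the enveloping groupoid `X⁺`: the four disjoint pieces
`X⁺(A,A) = XX⁻¹`, `X⁺(B,B) = X⁻¹X`, `X⁺(A,B) = X` and `X⁺(B,A) = X⁻¹`
(a formal copy of `X`). -/
inductive Arr {A B X : Type*} (P : Pregroupoid A B X) : Type _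
  | aa : XXinv P → Arr P
  | bb : XinvX P → Arr P
  | ab : X → Arr P
  | ba : X → Arr P

/-- The fraction `yx⁻¹`, as an arrow of `X⁺`. -/
def mkAA {A B X : Type*} (P : Pregroupoid A B X) (y x : X)
    (h : P.β x = P.β y) : Arr P :=
  .aa (Quot.mk _ ⟨(x, y), h⟩)

/-- The fraction `x⁻¹z`, as an arrow of `X⁺`. -/
def mkBB {A B X : Type*} (P : Pregroupoid A B X) (x z : X)
    (h : P.α x = P.α z) : Arr P :=
  .bb (Quot.mk _ ⟨(x, z), h⟩)

/-- `x ∈ X = X⁺(A,B)`, as an arrow of `X⁺`. -/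
def mkAB {A B X : Type*} (P : Pregroupoid A B X) (x : X) : Arr P := .ab x

/-- `x⁻¹ ∈ X⁻¹ = X⁺(B,A)`, as an arrow of `X⁺`. -/
def mkBA {A B X : Type*} (P : Pregroupoid A B X) (x : X) : Arr P := .ba x

/-- The domain book-keeping map of `X⁺`, with values in `A ⊔ B`. -/
def d0 {A B X : Type*} (P : Pregroupoid A B X) : Arr P → A ⊕ B
  | .aa c => Sum.inl (Quot.lift (fun p => P.α p.val.2)
      (fun p q => by rintro ⟨h, hq⟩; exact ((congrArg P.α hq).trans (P.α_op _ _ _ _ _)).symm) c)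
  | .bb c => Sum.inr (Quot.lift (fun p => P.β p.val.1)
      (fun p q => by rintro ⟨h, hq⟩; exact h) c)
  | .ab x => Sum.inl (P.α x)
  | .ba x => Sum.inr (P.β x)

/-- The codomain book-keeping map of `X⁺`, with values in `A ⊔ B`. -/
def d1 {A B X : Type*} (P : Pregroupoid A B X) : Arr P → A ⊕ B
  | .aa c => Sum.inl (Quot.lift (fun p => P.α p.val.1)
      (fun p q => by rintro ⟨h, hq⟩; exact h) c)
  | .bb c => Sum.inr (Quot.lift (fun p => P.β p.val.2)
      (fun p q => by rintro ⟨h, hq⟩; exact ((congrArg P.β hq).trans (P.β_op _ _ _ _ _)).symm) c)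
  | .ab x => Sum.inr (P.β x)
  | .ba x => Sum.inl (P.α x)

/-- The hom-sets of the enveloping groupoid `X⁺`, over the object set `A ⊔ B`. -/
def EnvHom {A B X : Type*} (P : Pregroupoid A B X) (a b : A ⊕ B) : Type _ :=
  {f : Arr P // d0 P f = a ∧ d1 P f = b}

/-- A groupoid structure on a family of hom-sets: identities, composition
(written from left to right), inverses, and the groupoid laws. -/
structure GroupoidStructure {Obj : Type*} (Hom : Obj → Obj → Type*) where
  ident : ∀ a, Hom a a
  comp : ∀ {a b c}, Hom a b → Hom b c → Hom a c
  inv : ∀ {a b}, Hom a b → Hom b a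
  id_comp : ∀ {a b} (f : Hom a b), comp (ident a) f = f
  comp_id : ∀ {a b} (f : Hom a b), comp f (ident b) = f
  assoc : ∀ {a b c d} (f : Hom a b) (g : Hom b c) (h : Hom c d),
    comp (comp f g) h = comp f (comp g h)
  inv_comp : ∀ {a b} (f : Hom a b), comp (inv f) f = ident b
  comp_inv : ∀ {a b} (f : Hom a b), comp f (inv f) = ident a

/-- The multiplication table of the enveloping groupoid `X⁺`, together with the
description of its identities: composition (left to right) of the four kinds of
arrows is given by `x₁x₂⁻¹ ∘ x₃x₄⁻¹ = (x₁x₂⁻¹x₃)x₄⁻¹`, `x₁x₂⁻¹ ∘ x₃ = x₁x₂⁻¹x₃`,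
`x₁ ∘ x₂⁻¹ = x₁x₂⁻¹`, `x₁ ∘ x₂⁻¹x₃ = x₁x₂⁻¹x₃`, `x₃⁻¹ ∘ x₂x₁⁻¹ = (x₁x₂⁻¹x₃)⁻¹`,
`x₂⁻¹ ∘ x₃ = x₂⁻¹x₃`, `x₃⁻¹x₂ ∘ x₁⁻¹ = (x₁x₂⁻¹x₃)⁻¹`,
`x₂⁻¹x₃ ∘ x₄⁻¹x₅ = x₂⁻¹(x₃x₄⁻¹x₅)`, and the identity at `α x` is `xx⁻¹`,
the identity at `β x` is `x⁻¹x`. -/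
def TableSpec {A B X : Type*} (P : Pregroupoid A B X)
    (str : GroupoidStructure (EnvHom P)) : Prop :=
  (∀ (a b c : A ⊕ B) (f : EnvHom P a b) (g : EnvHom P b c)
    (x1 x2 x3 x4 : X) (h12 : P.β x2 = P.β x1) (h34 : P.β x4 = P.β x3)
    (h23 : P.α x2 = P.α x3) (hu : P.β x4 = P.β (P.op x1 x2 x3 h12 h23)),
    f.val = mkAA P x1 x2 h12 → g.val = mkAA P x3 x4 h34 →
    (str.comp f g).val = mkAA P (P.op x1 x2 x3 h12 h23) x4 hu) ∧
  (∀ (a b c : A ⊕ B) (f : EnvHom P a b) (g : EnvHom P b c)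
    (x1 x2 x3 : X) (h12 : P.β x2 = P.β x1) (h23 : P.α x2 = P.α x3),
    f.val = mkAA P x1 x2 h12 → g.val = mkAB P x3 →
    (str.comp f g).val = mkAB P (P.op x1 x2 x3 h12 h23)) ∧
  (∀ (a b c : A ⊕ B) (f : EnvHom P a b) (g : EnvHom P b c)
    (x1 x2 : X) (h : P.β x2 = P.β x1),
    f.val = mkAB P x1 → g.val = mkBA P x2 →
    (str.comp f g).val = mkAA P x1 x2 h) ∧
  (∀ (a b c : A ⊕ B) (f : EnvHom P a b) (g : EnvHom P b c)
    (x1 x2 x3 : X) (h12 : P.β x2 = P.β x1) (h23 : P.α x2 = P.α x3),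
    f.val = mkAB P x1 → g.val = mkBB P x2 x3 h23 →
    (str.comp f g).val = mkAB P (P.op x1 x2 x3 h12 h23)) ∧
  (∀ (a b c : A ⊕ B) (f : EnvHom P a b) (g : EnvHom P b c)
    (x1 x2 x3 : X) (h12 : P.β x2 = P.β x1) (h23 : P.α x2 = P.α x3),
    f.val = mkBA P x3 → g.val = mkAA P x2 x1 h12.symm →
    (str.comp f g).val = mkBA P (P.op x1 x2 x3 h12 h23)) ∧
  (∀ (a b c : A ⊕ B) (f : EnvHom P a b) (g : EnvHom P b c)
    (x2 x3 : X) (h23 : P.α x2 = P.α x3),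
    f.val = mkBA P x2 → g.val = mkAB P x3 →
    (str.comp f g).val = mkBB P x2 x3 h23) ∧
  (∀ (a b c : A ⊕ B) (f : EnvHom P a b) (g : EnvHom P b c)
    (x1 x2 x3 : X) (h12 : P.β x2 = P.β x1) (h23 : P.α x2 = P.α x3),
    f.val = mkBB P x3 x2 h23.symm → g.val = mkBA P x1 →
    (str.comp f g).val = mkBA P (P.op x1 x2 x3 h12 h23)) ∧
  (∀ (a b c : A ⊕ B) (f : EnvHom P a b) (g : EnvHom P b c)
    (x2 x3 x4 x5 : X) (h23 : P.α x2 = P.α x3) (h43 : P.β x4 = P.β x3)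
    (h45 : P.α x4 = P.α x5) (hq : P.α x2 = P.α (P.op x3 x4 x5 h43 h45)),
    f.val = mkBB P x2 x3 h23 → g.val = mkBB P x4 x5 h45 →
    (str.comp f g).val = mkBB P x2 (P.op x3 x4 x5 h43 h45) hq) ∧
  (∀ (x : X) (a : A ⊕ B), a = Sum.inl (P.α x) →
    (str.ident a).val = mkAA P x x rfl) ∧
  (∀ (x : X) (b : A ⊕ B), b = Sum.inr (P.β x) →
    (str.ident b).val = mkBB P x x rfl)

noncomputable section EnvelopingProof

variable {A B X : Type*} (P : Pregroupoid A B X)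

attribute [local instance] Classical.propDecidable

theorem op_congr {y y' x x' z z' : X} (hy : y = y') (hx : x = x') (hz : z = z')
    (h1 : P.β x = P.β y) (h2 : P.α x = P.α z)
    (h1' : P.β x' = P.β y') (h2' : P.α x' = P.α z') :
    P.op y x z h1 h2 = P.op y' x' z' h1' h2' := by
  subst hy; subst hx; subst hz; rfl

/-- mixed associativity: `(x₁x₂⁻¹x₃)x₄⁻¹x₅ = x₁x₂⁻¹(x₃x₄⁻¹x₅)`. -/
theorem op_assoc (x1 x2 x3 x4 x5 : X) (h12 : P.β x2 = P.β x1) (h23 : P.α x2 = P.α x3)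
    (h43 : P.β x4 = P.β x3) (h45 : P.α x4 = P.α x5)
    (ha : P.β x4 = P.β (P.op x1 x2 x3 h12 h23))
    (hb : P.α x2 = P.α (P.op x3 x4 x5 h43 h45)) :
    P.op (P.op x1 x2 x3 h12 h23) x4 x5 ha h45
      = P.op x1 x2 (P.op x3 x4 x5 h43 h45) h12 hb := by
  have h3U : P.β x3 = P.β (P.op x1 x2 x3 h12 h23) := (P.β_op _ _ _ _ _).symm
  have h4' : P.α x3 = P.α (P.op x3 x4 x5 h43 h45) := (P.α_op _ _ _ _ _).symm
  exact (P.G1 (P.op x1 x2 x3 h12 h23) x3 x4 x5 h43 h45 h3U h4' ha).symm.trans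
    (P.G2 x1 x2 x3 (P.op x3 x4 x5 h43 h45) h12 h23 h3U h4' hb)

/-- `p(qr⁻¹p)⁻¹z = rq⁻¹z`. -/
theorem op_ii (q r p z : X) (h1 : P.β r = P.β q) (h2 : P.α r = P.α p)
    (hz : P.α q = P.α z)
    (ha : P.β (P.op q r p h1 h2) = P.β p) (hb : P.α (P.op q r p h1 h2) = P.α z) :
    P.op p (P.op q r p h1 h2) z ha hb = P.op r q z h1.symm hz := by
  have hαqw : P.α q = P.α (P.op q r p h1 h2) := (P.α_op _ _ _ _ _).symm
  have hA : P.op r q (P.op q r p h1 h2) h1.symm hαqw = p := by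
    rw [P.G1 r q r p h1 h2 h1.symm hαqw rfl, P.U1]
  have hB := P.G2 r q (P.op q r p h1 h2) z h1.symm hαqw (P.β_op _ _ _ _ _).symm hb hz
  exact (op_congr P hA.symm rfl rfl ha hb (P.β_op _ _ _ _ _).symm hb).trans hB

/-- `ed⁻¹(cb⁻¹a) = e(bc⁻¹d)⁻¹a`. -/
theorem op_iv (e d c b a : X) (h1 : P.β b = P.β c) (h2 : P.α b = P.α a)
    (hdc : P.α c = P.α d) (hde : P.β d = P.β e)
    (k2 : P.α d = P.α (P.op c b a h1 h2))
    (m1 : P.β (P.op b c d h1.symm hdc) = P.β e)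
    (m2 : P.α (P.op b c d h1.symm hdc) = P.α a) :
    P.op e d (P.op c b a h1 h2) hde k2
      = P.op e (P.op b c d h1.symm hdc) a m1 m2 := by
  have hβm : P.β (P.op b c d h1.symm hdc) = P.β d := P.β_op _ _ _ _ _
  have hαm : P.α (P.op b c d h1.symm hdc) = P.α b := P.α_op _ _ _ _ _
  have hαa : P.α (P.op b c d h1.symm hdc) = P.α a := hαm.trans h2
  have hB : P.op (P.op b c d h1.symm hdc) d c hβm.symm hdc.symm = b := by
    rw [P.G2 b c d c h1.symm hdc (P.β_op _ _ _ _ _).symm hdc.symm rfl, P.U2]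
  have hC : P.op c b a h1 h2 = P.op d (P.op b c d h1.symm hdc) a hβm hαa := by
    refine (op_congr P rfl hB.symm rfl h1 h2 (P.β_op _ _ _ _ _)
      ((P.α_op _ _ _ _ _).trans hαa)).trans ?_
    exact op_ii P (P.op b c d h1.symm hdc) d c a hβm.symm hdc.symm hαa
      (P.β_op _ _ _ _ _) ((P.α_op _ _ _ _ _).trans hαa)
  calc P.op e d (P.op c b a h1 h2) hde k2
      = P.op e d (P.op d (P.op b c d h1.symm hdc) a hβm hαa) hde
          (P.α_op _ _ _ _ _).symm :=
        op_congr P rfl rfl hC hde k2 hde (P.α_op _ _ _ _ _).symm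
    _ = P.op e (P.op b c d h1.symm hdc) a m1 hαa :=
        P.G1 e d (P.op b c d h1.symm hdc) a hβm hαa hde (P.α_op _ _ _ _ _).symm m1
    _ = P.op e (P.op b c d h1.symm hdc) a m1 m2 := rfl

/-- composition `XX⁻¹ × XX⁻¹ → XX⁻¹` on representatives. -/
def cAAaa (p q : HPair P) : XXinv P :=
  if h : P.α p.val.1 = P.α q.val.2 then
    Quot.mk _ ⟨(q.val.1, P.op p.val.2 p.val.1 q.val.2 p.prop h),
      q.prop.trans (P.β_op _ _ _ _ _).symm⟩
  else Quot.mk _ p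

theorem cAAaa_left (p p' q : HPair P) (hp : hRel P p p') :
    cAAaa P p q = cAAaa P p' q := by
  obtain ⟨ha, he⟩ := hp
  by_cases h : P.α p.val.1 = P.α q.val.2
  · rw [cAAaa, cAAaa]; erw [dif_pos h, dif_pos (ha.symm.trans h)]
    have key : P.op p'.val.2 p'.val.1 q.val.2 p'.prop (ha.symm.trans h)
        = P.op p.val.2 p.val.1 q.val.2 p.prop h := by
      refine (op_congr P he rfl rfl p'.prop (ha.symm.trans h)
        (P.β_op _ _ _ _ _).symm (ha.symm.trans h)).trans ?_
      exact P.G2 p.val.2 p.val.1 p'.val.1 q.val.2 p.prop ha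
        (P.β_op _ _ _ _ _).symm (ha.symm.trans h) h
    exact congrArg (Quot.mk _) (Subtype.ext (congrArg (Prod.mk q.val.1) key.symm))
  · rw [cAAaa, cAAaa]; erw [dif_neg h, dif_neg (fun h' => h (ha.trans h'))]
    exact Quot.sound ⟨ha, he⟩

theorem cAAaa_right (p q q' : HPair P) (hq : hRel P q q') :
    cAAaa P p q = cAAaa P p q' := by
  obtain ⟨ha, he⟩ := hq
  have hα2 : P.α q'.val.2 = P.α q.val.2 := by rw [he, P.α_op]
  by_cases h : P.α p.val.1 = P.α q.val.2
  · rw [cAAaa, cAAaa]; erw [dif_pos h, dif_pos (h.trans hα2.symm)]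
    refine Quot.sound ⟨ha, ?_⟩
    refine (op_congr P rfl rfl he p.prop (h.trans hα2.symm) p.prop
      (h.trans (P.α_op _ _ _ _ _).symm)).trans ?_
    exact (op_assoc P p.val.2 p.val.1 q.val.2 q.val.1 q'.val.1 p.prop h q.prop ha
      (q.prop.trans (P.β_op _ _ _ _ _).symm)
      (h.trans (P.α_op _ _ _ _ _).symm)).symm
  · rw [cAAaa, cAAaa]; erw [dif_neg h, dif_neg (fun h' => h (h'.trans hα2))]

def compAAAA (c d : XXinv P) : XXinv P :=
  Quot.lift
    (fun p => Quot.lift (fun q => cAAaa P p q) (fun q q' hq => cAAaa_right P p q q' hq) d)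
    (fun p p' hp => by
      induction d using Quot.ind with
      | _ q => exact cAAaa_left P p p' q hp) c

def cAAab (p : HPair P) (z : X) : X :=
  if h : P.α p.val.1 = P.α z then P.op p.val.2 p.val.1 z p.prop h else z

theorem cAAab_left (p p' : HPair P) (z : X) (hp : hRel P p p') :
    cAAab P p z = cAAab P p' z := by
  obtain ⟨ha, he⟩ := hp
  by_cases h : P.α p.val.1 = P.α z
  · rw [cAAab, cAAab]; erw [dif_pos h, dif_pos (ha.symm.trans h)]
    exact ((op_congr P he rfl rfl p'.prop (ha.symm.trans h)
      (P.β_op _ _ _ _ _).symm (ha.symm.trans h)).trans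
      (P.G2 p.val.2 p.val.1 p'.val.1 z p.prop ha
        (P.β_op _ _ _ _ _).symm (ha.symm.trans h) h)).symm
  · rw [cAAab, cAAab]; erw [dif_neg h, dif_neg (fun h' => h (ha.trans h'))]

def compAAab (c : XXinv P) (z : X) : X :=
  Quot.lift (fun p => cAAab P p z) (fun p p' hp => cAAab_left P p p' z hp) c

def cBAaa (x : X) (q : HPair P) : X :=
  if h : P.α q.val.2 = P.α x then P.op q.val.1 q.val.2 x q.prop.symm h else x

theorem cBAaa_right (x : X) (q q' : HPair P) (hq : hRel P q q') :
    cBAaa P x q = cBAaa P x q' := by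
  obtain ⟨ha, he⟩ := hq
  have hα2 : P.α q'.val.2 = P.α q.val.2 := by rw [he, P.α_op]
  by_cases h : P.α q.val.2 = P.α x
  · rw [cBAaa, cBAaa]; erw [dif_pos h, dif_pos (hα2.trans h)]
    exact ((op_congr P rfl he rfl q'.prop.symm (hα2.trans h)
      (P.β_op _ _ _ _ _) ((P.α_op _ _ _ _ _).trans h)).trans
      (op_ii P q.val.2 q.val.1 q'.val.1 x q.prop ha h
        (P.β_op _ _ _ _ _) ((P.α_op _ _ _ _ _).trans h))).symm
  · rw [cBAaa, cBAaa]; erw [dif_neg h, dif_neg (fun h' => h (hα2.symm.trans h'))]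

def compBAaa (x : X) (c : XXinv P) : X :=
  Quot.lift (fun q => cBAaa P x q) (fun q q' hq => cBAaa_right P x q q' hq) c

def cABbb (x : X) (q : VPair P) : X :=
  if h : P.β q.val.1 = P.β x then P.op x q.val.1 q.val.2 h q.prop else x

theorem cABbb_right (x : X) (q q' : VPair P) (hq : vRel P q q') :
    cABbb P x q = cABbb P x q' := by
  obtain ⟨hb, he⟩ := hq
  by_cases h : P.β q.val.1 = P.β x
  · rw [cABbb, cABbb]; erw [dif_pos h, dif_pos (hb.symm.trans h)]
    exact ((op_congr P rfl rfl he (hb.symm.trans h) q'.prop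
      (hb.symm.trans h) (P.α_op _ _ _ _ _).symm).trans
      (P.G1 x q'.val.1 q.val.1 q.val.2 hb q.prop (hb.symm.trans h)
        (P.α_op _ _ _ _ _).symm h)).symm
  · rw [cABbb, cABbb]; erw [dif_neg h, dif_neg (fun h' => h (hb.trans h'))]

def compABbb (x : X) (c : XinvX P) : X :=
  Quot.lift (fun q => cABbb P x q) (fun q q' hq => cABbb_right P x q q' hq) c

def cBBba (q : VPair P) (x : X) : X :=
  if h : P.β q.val.2 = P.β x then P.op x q.val.2 q.val.1 h q.prop.symm else x

theorem cBBba_left (q q' : VPair P) (x : X) (hq : vRel P q q') :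
    cBBba P q x = cBBba P q' x := by
  obtain ⟨hb, he⟩ := hq
  have hβ2 : P.β q'.val.2 = P.β q.val.2 := by rw [he, P.β_op]
  by_cases h : P.β q.val.2 = P.β x
  · rw [cBBba, cBBba]; erw [dif_pos h, dif_pos (hβ2.trans h)]
    refine ((op_congr P rfl rfl (P.U2 q.val.1 q'.val.1 hb.symm rfl).symm h q.prop.symm
      h (q.prop.symm.trans (P.α_op _ _ _ _ _).symm)).trans
      ((op_iv P x q.val.2 q.val.1 q'.val.1 q'.val.1 hb.symm rfl q.prop h
        (q.prop.symm.trans (P.α_op _ _ _ _ _).symm)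
        ((P.β_op _ _ _ _ _).trans h) (P.α_op _ _ _ _ _)))).trans ?_
    exact op_congr P rfl he.symm rfl ((P.β_op _ _ _ _ _).trans h) (P.α_op _ _ _ _ _)
      (hβ2.trans h) q'.prop.symm
  · rw [cBBba, cBBba]; erw [dif_neg h, dif_neg (fun h' => h (hβ2.symm.trans h'))]

def compBBba (c : XinvX P) (x : X) : X :=
  Quot.lift (fun q => cBBba P q x) (fun q q' hq => cBBba_left P q q' x hq) c

def cBBbb (p q : VPair P) : XinvX P :=
  if h : P.β q.val.1 = P.β p.val.2 then
    Quot.mk _ ⟨(p.val.1, P.op p.val.2 q.val.1 q.val.2 h q.prop),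
      p.prop.trans (P.α_op _ _ _ _ _).symm⟩
  else Quot.mk _ p

theorem cBBbb_left (p p' q : VPair P) (hp : vRel P p p') :
    cBBbb P p q = cBBbb P p' q := by
  obtain ⟨hb, he⟩ := hp
  have hβ2 : P.β p'.val.2 = P.β p.val.2 := by rw [he, P.β_op]
  by_cases h : P.β q.val.1 = P.β p.val.2
  · rw [cBBbb, cBBbb]; erw [dif_pos h, dif_pos (h.trans hβ2.symm)]
    refine Quot.sound ⟨hb, ?_⟩
    refine (op_congr P he rfl rfl (h.trans hβ2.symm) q.prop
      (h.trans (P.β_op _ _ _ _ _).symm) q.prop).trans ?_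
    exact op_assoc P p'.val.1 p.val.1 p.val.2 q.val.1 q.val.2 hb p.prop h q.prop
      (h.trans (P.β_op _ _ _ _ _).symm) (p.prop.trans (P.α_op _ _ _ _ _).symm)
  · rw [cBBbb, cBBbb]; erw [dif_neg h, dif_neg (fun h' => h (h'.trans hβ2))]
    exact Quot.sound ⟨hb, he⟩

theorem cBBbb_right (p q q' : VPair P) (hq : vRel P q q') :
    cBBbb P p q = cBBbb P p q' := by
  obtain ⟨hb, he⟩ := hq
  by_cases h : P.β q.val.1 = P.β p.val.2
  · rw [cBBbb, cBBbb]; erw [dif_pos h, dif_pos (hb.symm.trans h)]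
    have key : P.op p.val.2 q'.val.1 q'.val.2 (hb.symm.trans h) q'.prop
        = P.op p.val.2 q.val.1 q.val.2 h q.prop := by
      refine (op_congr P rfl rfl he (hb.symm.trans h) q'.prop
        (hb.symm.trans h) (P.α_op _ _ _ _ _).symm).trans ?_
      exact P.G1 p.val.2 q'.val.1 q.val.1 q.val.2 hb q.prop (hb.symm.trans h)
        (P.α_op _ _ _ _ _).symm h
    exact congrArg (Quot.mk _) (Subtype.ext (congrArg (Prod.mk p.val.1) key.symm))
  · rw [cBBbb, cBBbb]; erw [dif_neg h, dif_neg (fun h' => h (hb.trans h'))]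

def compBBbb (c d : XinvX P) : XinvX P :=
  Quot.lift
    (fun p => Quot.lift (fun q => cBBbb P p q) (fun q q' hq => cBBbb_right P p q q' hq) d)
    (fun p p' hp => by
      induction d using Quot.ind with
      | _ q => exact cBBbb_left P p p' q hp) c

/-- The raw composition map on arrows (junk values off the composable locus). -/
def rawComp : Arr P → Arr P → Arr P
  | .aa c, .aa d => .aa (compAAAA P c d)
  | .aa c, .ab z => .ab (compAAab P c z)
  | .ab x, .ba y =>
      if h : P.β y = P.β x then .aa (Quot.mk _ ⟨(y, x), h⟩)
      else .aa (Quot.mk _ ⟨(x, x), rfl⟩)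
  | .ab x, .bb c => .ab (compABbb P x c)
  | .ba x, .aa c => .ba (compBAaa P x c)
  | .ba x, .ab y =>
      if h : P.α x = P.α y then .bb (Quot.mk _ ⟨(x, y), h⟩)
      else .bb (Quot.mk _ ⟨(x, x), rfl⟩)
  | .bb c, .ba x => .ba (compBBba P c x)
  | .bb c, .bb d => .bb (compBBbb P c d)
  | f, _ => f

theorem raw1 (x1 x2 x3 x4 : X) (h12 : P.β x2 = P.β x1) (h34 : P.β x4 = P.β x3)
    (h23 : P.α x2 = P.α x3) :
    rawComp P (.aa (Quot.mk _ ⟨(x2, x1), h12⟩)) (.aa (Quot.mk _ ⟨(x4, x3), h34⟩))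
      = .aa (Quot.mk _ ⟨(x4, P.op x1 x2 x3 h12 h23),
          h34.trans (P.β_op _ _ _ _ _).symm⟩) := by
  show Arr.aa (cAAaa P ⟨(x2, x1), h12⟩ ⟨(x4, x3), h34⟩) = _
  simp only [cAAaa]; erw [dif_pos h23]

theorem raw2 (x1 x2 x3 : X) (h12 : P.β x2 = P.β x1) (h23 : P.α x2 = P.α x3) :
    rawComp P (.aa (Quot.mk _ ⟨(x2, x1), h12⟩)) (.ab x3)
      = .ab (P.op x1 x2 x3 h12 h23) := by
  show Arr.ab (cAAab P ⟨(x2, x1), h12⟩ x3) = _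
  simp only [cAAab]; erw [dif_pos h23]

theorem raw3 (x1 x2 : X) (h : P.β x2 = P.β x1) :
    rawComp P (.ab x1) (.ba x2) = .aa (Quot.mk _ ⟨(x2, x1), h⟩) := by
  show (if h' : P.β x2 = P.β x1 then Arr.aa (Quot.mk _ ⟨(x2, x1), h'⟩)
      else Arr.aa (Quot.mk _ ⟨(x1, x1), rfl⟩)) = _
  rw [dif_pos h]

theorem raw4 (x1 x2 x3 : X) (h12 : P.β x2 = P.β x1) (h23 : P.α x2 = P.α x3) :
    rawComp P (.ab x1) (.bb (Quot.mk _ ⟨(x2, x3), h23⟩))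
      = .ab (P.op x1 x2 x3 h12 h23) := by
  show Arr.ab (cABbb P x1 ⟨(x2, x3), h23⟩) = _
  simp only [cABbb]; erw [dif_pos h12]

theorem raw5 (x1 x2 x3 : X) (h21 : P.β x1 = P.β x2) (h23 : P.α x2 = P.α x3) :
    rawComp P (.ba x3) (.aa (Quot.mk _ ⟨(x1, x2), h21⟩))
      = .ba (P.op x1 x2 x3 h21.symm h23) := by
  show Arr.ba (cBAaa P x3 ⟨(x1, x2), h21⟩) = _
  simp only [cBAaa]; erw [dif_pos h23]

theorem raw6 (x1 x2 : X) (h : P.α x1 = P.α x2) :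
    rawComp P (.ba x1) (.ab x2) = .bb (Quot.mk _ ⟨(x1, x2), h⟩) := by
  show (if h' : P.α x1 = P.α x2 then Arr.bb (Quot.mk _ ⟨(x1, x2), h'⟩)
      else Arr.bb (Quot.mk _ ⟨(x1, x1), rfl⟩)) = _
  rw [dif_pos h]

theorem raw7 (x1 x2 x3 : X) (h32 : P.α x3 = P.α x2) (h12 : P.β x2 = P.β x1) :
    rawComp P (.bb (Quot.mk _ ⟨(x3, x2), h32⟩)) (.ba x1)
      = .ba (P.op x1 x2 x3 h12 h32.symm) := by
  show Arr.ba (cBBba P ⟨(x3, x2), h32⟩ x1) = _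
  simp only [cBBba]; erw [dif_pos h12]

theorem raw8 (x2 x3 x4 x5 : X) (h23 : P.α x2 = P.α x3) (h45 : P.α x4 = P.α x5)
    (h43 : P.β x4 = P.β x3) :
    rawComp P (.bb (Quot.mk _ ⟨(x2, x3), h23⟩)) (.bb (Quot.mk _ ⟨(x4, x5), h45⟩))
      = .bb (Quot.mk _ ⟨(x2, P.op x3 x4 x5 h43 h45),
          h23.trans (P.α_op _ _ _ _ _).symm⟩) := by
  show Arr.bb (cBBbb P ⟨(x2, x3), h23⟩ ⟨(x4, x5), h45⟩) = _
  simp only [cBBbb]; erw [dif_pos h43]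

theorem hswap (p p' : HPair P) (hp : hRel P p p') :
    hRel P ⟨(p.val.2, p.val.1), p.prop.symm⟩ ⟨(p'.val.2, p'.val.1), p'.prop.symm⟩ := by
  obtain ⟨ha, he⟩ := hp
  have hα : P.α p.val.2 = P.α p'.val.2 := by rw [he, P.α_op]
  refine ⟨hα, ?_⟩
  exact (((op_congr P rfl rfl he p.prop.symm hα p.prop.symm
      (P.α_op _ _ _ _ _).symm).trans
    (P.G1 p.val.1 p.val.2 p.val.1 p'.val.1 p.prop ha p.prop.symm
      (P.α_op _ _ _ _ _).symm rfl)).trans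
    (P.U1 p.val.1 p'.val.1 rfl ha)).symm

theorem vswap (p p' : VPair P) (hp : vRel P p p') :
    vRel P ⟨(p.val.2, p.val.1), p.prop.symm⟩ ⟨(p'.val.2, p'.val.1), p'.prop.symm⟩ := by
  obtain ⟨hb, he⟩ := hp
  have hβ : P.β p.val.2 = P.β p'.val.2 := by rw [he, P.β_op]
  refine ⟨hβ, ?_⟩
  exact (((op_congr P he rfl rfl hβ p.prop.symm
      (P.β_op _ _ _ _ _).symm p.prop.symm).trans
    (P.G2 p'.val.1 p.val.1 p.val.2 p.val.1 hb p.prop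
      (P.β_op _ _ _ _ _).symm p.prop.symm rfl)).trans
    (P.U2 p'.val.1 p.val.1 hb rfl)).symm

/-- The raw inversion map on arrows. -/
def rawInv : Arr P → Arr P
  | .aa c => .aa (Quot.lift
      (fun p => Quot.mk _ (⟨(p.val.2, p.val.1), p.prop.symm⟩ : HPair P))
      (fun p p' hp => Quot.sound (hswap P p p' hp)) c)
  | .bb c => .bb (Quot.lift
      (fun p => Quot.mk _ (⟨(p.val.2, p.val.1), p.prop.symm⟩ : VPair P))
      (fun p p' hp => Quot.sound (vswap P p p' hp)) c)
  | .ab x => .ba x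
  | .ba x => .ab x

/-- The identity arrows. -/
def identArr : A ⊕ B → Arr P
  | .inl a => .aa (Quot.mk _ ⟨((P.α_surj a).choose, (P.α_surj a).choose), rfl⟩)
  | .inr b => .bb (Quot.mk _ ⟨((P.β_surj b).choose, (P.β_surj b).choose), rfl⟩)

theorem identArr_aa (x : X) :
    identArr P (Sum.inl (P.α x)) = .aa (Quot.mk _ ⟨(x, x), rfl⟩) :=
  congrArg Arr.aa (Quot.sound
    ⟨(P.α_surj (P.α x)).choose_spec, (P.U1 _ x rfl (P.α_surj (P.α x)).choose_spec).symm⟩)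

theorem identArr_bb (x : X) :
    identArr P (Sum.inr (P.β x)) = .bb (Quot.mk _ ⟨(x, x), rfl⟩) :=
  congrArg Arr.bb (Quot.sound
    ⟨(P.β_surj (P.β x)).choose_spec, (P.U2 x _ (P.β_surj (P.β x)).choose_spec rfl).symm⟩)

theorem d0_identArr (a : A ⊕ B) : d0 P (identArr P a) = a := by
  cases a with
  | inl a => exact congrArg Sum.inl (P.α_surj a).choose_spec
  | inr b => exact congrArg Sum.inr (P.β_surj b).choose_spec

theorem d1_identArr (a : A ⊕ B) : d1 P (identArr P a) = a := by
  cases a with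
  | inl a => exact congrArg Sum.inl (P.α_surj a).choose_spec
  | inr b => exact congrArg Sum.inr (P.β_surj b).choose_spec

theorem d0_rawInv (f : Arr P) : d0 P (rawInv P f) = d1 P f := by
  obtain (c | c | x | x) := f
  · induction c using Quot.ind with | _ p => rfl
  · induction c using Quot.ind with | _ p => rfl
  · rfl
  · rfl

theorem d1_rawInv (f : Arr P) : d1 P (rawInv P f) = d0 P f := by
  obtain (c | c | x | x) := f
  · induction c using Quot.ind with | _ p => rfl
  · induction c using Quot.ind with | _ p => rfl
  · rfl
  · rfl

theorem d0d1_rawComp (f g : Arr P) (hc : d1 P f = d0 P g) :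
    d0 P (rawComp P f g) = d0 P f ∧ d1 P (rawComp P f g) = d1 P g := by
  obtain (c | c | x | x) := f <;> obtain (d | d | y | y) := g
  -- aa, aa
  · induction c using Quot.ind with | _ p => ?_
    induction d using Quot.ind with | _ q => ?_
    obtain ⟨⟨x2, x1⟩, h12⟩ := p
    obtain ⟨⟨x4, x3⟩, h34⟩ := q
    have h23 : P.α x2 = P.α x3 := Sum.inl.inj hc
    rw [raw1 P x1 x2 x3 x4 h12 h34 h23]
    exact ⟨congrArg Sum.inl (P.α_op _ _ _ _ _), rfl⟩
  -- aa, bb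
  · exact absurd hc (by simp [d0, d1])
  -- aa, ab
  · induction c using Quot.ind with | _ p => ?_
    obtain ⟨⟨x2, x1⟩, h12⟩ := p
    have h23 : P.α x2 = P.α y := Sum.inl.inj hc
    rw [raw2 P x1 x2 y h12 h23]
    exact ⟨congrArg Sum.inl (P.α_op _ _ _ _ _), congrArg Sum.inr (P.β_op _ _ _ _ _)⟩
  -- aa, ba
  · exact absurd hc (by simp [d0, d1])
  -- bb, aa
  · exact absurd hc (by simp [d0, d1])
  -- bb, bb
  · induction c using Quot.ind with | _ p => ?_
    induction d using Quot.ind with | _ q => ?_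
    obtain ⟨⟨u, v⟩, huv⟩ := p
    obtain ⟨⟨s, t⟩, hst⟩ := q
    have h43 : P.β s = P.β v := (Sum.inr.inj hc).symm
    rw [raw8 P u v s t huv hst h43]
    exact ⟨rfl, congrArg Sum.inr (P.β_op _ _ _ _ _)⟩
  -- bb, ab
  · exact absurd hc (by simp [d0, d1])
  -- bb, ba
  · induction c using Quot.ind with | _ p => ?_
    obtain ⟨⟨u, v⟩, huv⟩ := p
    have h12 : P.β v = P.β y := Sum.inr.inj hc
    rw [raw7 P y v u huv h12]
    exact ⟨congrArg Sum.inr (P.β_op _ _ _ _ _), congrArg Sum.inl (P.α_op _ _ _ _ _)⟩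
  -- ab, aa
  · exact absurd hc (by simp [d0, d1])
  -- ab, bb
  · induction d using Quot.ind with | _ q => ?_
    obtain ⟨⟨u, v⟩, huv⟩ := q
    have h12 : P.β u = P.β x := (Sum.inr.inj hc).symm
    rw [raw4 P x u v h12 huv]
    exact ⟨congrArg Sum.inl (P.α_op _ _ _ _ _), congrArg Sum.inr (P.β_op _ _ _ _ _)⟩
  -- ab, ab
  · exact absurd hc (by simp [d0, d1])
  -- ab, ba
  · have h : P.β y = P.β x := (Sum.inr.inj hc).symm
    rw [raw3 P x y h]
    exact ⟨rfl, rfl⟩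
  -- ba, aa
  · induction d using Quot.ind with | _ q => ?_
    obtain ⟨⟨u, v⟩, huv⟩ := q
    have h23 : P.α v = P.α x := (Sum.inl.inj hc).symm
    rw [raw5 P u v x huv h23]
    exact ⟨congrArg Sum.inr (P.β_op _ _ _ _ _), congrArg Sum.inl (P.α_op _ _ _ _ _)⟩
  -- ba, bb
  · exact absurd hc (by simp [d0, d1])
  -- ba, ab
  · have h : P.α x = P.α y := Sum.inl.inj hc
    rw [raw6 P x y h]
    exact ⟨rfl, rfl⟩
  -- ba, ba
  · exact absurd hc (by simp [d0, d1])

/-- Composition of the enveloping groupoid, on hom-sets. -/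
def envComp {a b c : A ⊕ B} (f : EnvHom P a b) (g : EnvHom P b c) : EnvHom P a c :=
  ⟨rawComp P f.1 g.1, by
    obtain ⟨h0, h1⟩ := d0d1_rawComp P f.1 g.1 (f.2.2.trans g.2.1.symm)
    exact ⟨h0.trans f.2.1, h1.trans g.2.2⟩⟩

theorem raw_id_left (g : Arr P) : rawComp P (identArr P (d0 P g)) g = g := by
  obtain (c | c | x | x) := g
  · induction c using Quot.ind with | _ p => ?_
    obtain ⟨⟨u, v⟩, huv⟩ := p
    have he := (P.α_surj (P.α v)).choose_spec
    refine (raw1 P _ _ v u rfl huv he).trans ?_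
    exact congrArg Arr.aa (congrArg (Quot.mk _)
      (Subtype.ext (congrArg (Prod.mk u) (P.U1 _ v rfl he))))
  · induction c using Quot.ind with | _ p => ?_
    obtain ⟨⟨u, v⟩, huv⟩ := p
    have he := (P.β_surj (P.β u)).choose_spec
    refine (raw8 P _ _ u v rfl huv he.symm).trans ?_
    exact (congrArg Arr.bb (Quot.sound ⟨he.symm, rfl⟩)).symm
  · have he := (P.α_surj (P.α x)).choose_spec
    exact (raw2 P _ _ x rfl he).trans (congrArg Arr.ab (P.U1 _ x rfl he))
  · have he := (P.β_surj (P.β x)).choose_spec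
    exact (raw7 P x _ _ rfl he).trans (congrArg Arr.ba (P.U2 x _ he rfl))

theorem raw_id_right (g : Arr P) : rawComp P g (identArr P (d1 P g)) = g := by
  obtain (c | c | x | x) := g
  · induction c using Quot.ind with | _ p => ?_
    obtain ⟨⟨u, v⟩, huv⟩ := p
    have he := (P.α_surj (P.α u)).choose_spec
    refine (raw1 P v u _ _ huv rfl he.symm).trans ?_
    exact (congrArg Arr.aa (Quot.sound ⟨he.symm, rfl⟩)).symm
  · induction c using Quot.ind with | _ p => ?_
    obtain ⟨⟨u, v⟩, huv⟩ := p
    have he := (P.β_surj (P.β v)).choose_spec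
    refine (raw8 P u v _ _ huv rfl he).trans ?_
    exact congrArg Arr.bb (congrArg (Quot.mk _)
      (Subtype.ext (congrArg (Prod.mk u) (P.U2 v _ he rfl))))
  · have he := (P.β_surj (P.β x)).choose_spec
    exact (raw4 P x _ _ he rfl).trans (congrArg Arr.ab (P.U2 x _ he rfl))
  · have he := (P.α_surj (P.α x)).choose_spec
    exact (raw5 P _ _ x rfl he).trans (congrArg Arr.ba (P.U1 _ x rfl he))

theorem raw_inv_left (g : Arr P) : rawComp P (rawInv P g) g = identArr P (d1 P g) := by
  obtain (c | c | x | x) := g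
  · induction c using Quot.ind with | _ p => ?_
    obtain ⟨⟨u, v⟩, huv⟩ := p
    refine (raw1 P u v v u huv.symm huv rfl).trans ?_
    refine Eq.trans ?_ (identArr_aa P u).symm
    exact congrArg Arr.aa (congrArg (Quot.mk _)
      (Subtype.ext (congrArg (Prod.mk u) (P.U2 u v huv.symm rfl))))
  · induction c using Quot.ind with | _ p => ?_
    obtain ⟨⟨u, v⟩, huv⟩ := p
    refine (raw8 P v u u v huv.symm huv rfl).trans ?_
    refine Eq.trans ?_ (identArr_bb P v).symm
    exact congrArg Arr.bb (congrArg (Quot.mk _)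
      (Subtype.ext (congrArg (Prod.mk v) (P.U1 u v rfl huv))))
  · exact (raw6 P x x rfl).trans (identArr_bb P x).symm
  · exact (raw3 P x x rfl).trans (identArr_aa P x).symm

theorem raw_inv_right (g : Arr P) : rawComp P g (rawInv P g) = identArr P (d0 P g) := by
  obtain (c | c | x | x) := g
  · induction c using Quot.ind with | _ p => ?_
    obtain ⟨⟨u, v⟩, huv⟩ := p
    refine (raw1 P v u u v huv huv.symm rfl).trans ?_
    refine Eq.trans ?_ (identArr_aa P v).symm
    exact congrArg Arr.aa (congrArg (Quot.mk _)
      (Subtype.ext (congrArg (Prod.mk v) (P.U2 v u huv rfl))))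
  · induction c using Quot.ind with | _ p => ?_
    obtain ⟨⟨u, v⟩, huv⟩ := p
    refine (raw8 P u v v u huv huv.symm rfl).trans ?_
    refine Eq.trans ?_ (identArr_bb P u).symm
    exact congrArg Arr.bb (congrArg (Quot.mk _)
      (Subtype.ext (congrArg (Prod.mk u) (P.U1 v u rfl huv.symm))))
  · exact (raw3 P x x rfl).trans (identArr_aa P x).symm
  · exact (raw6 P x x rfl).trans (identArr_bb P x).symm

theorem raw_assoc (f g h : Arr P) (hfg : d1 P f = d0 P g) (hgh : d1 P g = d0 P h) :
    rawComp P (rawComp P f g) h = rawComp P f (rawComp P g h) := by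
  obtain (cf | cf | xa | xa) := f <;> obtain (cg | cg | xb | xb) := g <;>
    obtain (ch | ch | xc | xc) := h <;>
    (try exact (Sum.inl_ne_inr hfg).elim) <;> (try exact (Sum.inr_ne_inl hfg).elim) <;>
    (try exact (Sum.inl_ne_inr hgh).elim) <;> (try exact (Sum.inr_ne_inl hgh).elim)
  -- (aa, aa, aa)
  · induction cf using Quot.ind with | _ p => ?_
    induction cg using Quot.ind with | _ q => ?_
    induction ch using Quot.ind with | _ r => ?_
    obtain ⟨⟨a1, a2⟩, ha⟩ := p
    obtain ⟨⟨b1, b2⟩, hb⟩ := q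
    obtain ⟨⟨c1, c2⟩, hc⟩ := r
    have e1 : P.α a1 = P.α b2 := Sum.inl.inj hfg
    have e2 : P.α b1 = P.α c2 := Sum.inl.inj hgh
    rw [raw1 P a2 a1 b2 b1 ha hb e1, raw1 P _ b1 c2 c1 _ hc e2,
      raw1 P b2 b1 c2 c1 hb hc e2,
      raw1 P a2 a1 _ c1 ha _ (e1.trans (P.α_op _ _ _ _ _).symm)]
    exact congrArg Arr.aa (congrArg (Quot.mk _) (Subtype.ext (congrArg (Prod.mk c1)
      (op_assoc P a2 a1 b2 b1 c2 ha e1 hb e2 (hb.trans (P.β_op _ _ _ _ _).symm)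
        (e1.trans (P.α_op _ _ _ _ _).symm)))))
  -- (aa, aa, ab)
  · induction cf using Quot.ind with | _ p => ?_
    induction cg using Quot.ind with | _ q => ?_
    obtain ⟨⟨a1, a2⟩, ha⟩ := p
    obtain ⟨⟨b1, b2⟩, hb⟩ := q
    have e1 : P.α a1 = P.α b2 := Sum.inl.inj hfg
    have e2 : P.α b1 = P.α xc := Sum.inl.inj hgh
    rw [raw1 P a2 a1 b2 b1 ha hb e1, raw2 P _ b1 xc _ e2,
      raw2 P b2 b1 xc hb e2, raw2 P a2 a1 _ ha (e1.trans (P.α_op _ _ _ _ _).symm)]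
    exact congrArg Arr.ab
      (op_assoc P a2 a1 b2 b1 xc ha e1 hb e2 (hb.trans (P.β_op _ _ _ _ _).symm)
        (e1.trans (P.α_op _ _ _ _ _).symm))
  -- (aa, ab, bb)
  · induction cf using Quot.ind with | _ p => ?_
    induction ch using Quot.ind with | _ r => ?_
    obtain ⟨⟨a1, a2⟩, ha⟩ := p
    obtain ⟨⟨c1, c2⟩, hc⟩ := r
    have e1 : P.α a1 = P.α xb := Sum.inl.inj hfg
    have e2 : P.β c1 = P.β xb := (Sum.inr.inj hgh).symm
    rw [raw2 P a2 a1 xb ha e1,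
      raw4 P _ c1 c2 (e2.trans (P.β_op _ _ _ _ _).symm) hc,
      raw4 P xb c1 c2 e2 hc, raw2 P a2 a1 _ ha (e1.trans (P.α_op _ _ _ _ _).symm)]
    exact congrArg Arr.ab
      (op_assoc P a2 a1 xb c1 c2 ha e1 e2 hc (e2.trans (P.β_op _ _ _ _ _).symm)
        (e1.trans (P.α_op _ _ _ _ _).symm))
  -- (aa, ab, ba)
  · induction cf using Quot.ind with | _ p => ?_
    obtain ⟨⟨a1, a2⟩, ha⟩ := p
    have e1 : P.α a1 = P.α xb := Sum.inl.inj hfg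
    have e2 : P.β xc = P.β xb := (Sum.inr.inj hgh).symm
    rw [raw2 P a2 a1 xb ha e1,
      raw3 P _ xc (e2.trans (P.β_op _ _ _ _ _).symm),
      raw3 P xb xc e2, raw1 P a2 a1 xb xc ha e2 e1]
  -- (bb, bb, bb)
  · induction cf using Quot.ind with | _ p => ?_
    induction cg using Quot.ind with | _ q => ?_
    induction ch using Quot.ind with | _ r => ?_
    obtain ⟨⟨a1, a2⟩, ha⟩ := p
    obtain ⟨⟨b1, b2⟩, hb⟩ := q
    obtain ⟨⟨c1, c2⟩, hc⟩ := r
    have e1 : P.β b1 = P.β a2 := (Sum.inr.inj hfg).symm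
    have e2 : P.β c1 = P.β b2 := (Sum.inr.inj hgh).symm
    rw [raw8 P a1 a2 b1 b2 ha hb e1,
      raw8 P a1 _ c1 c2 _ hc (e2.trans (P.β_op _ _ _ _ _).symm),
      raw8 P b1 b2 c1 c2 hb hc e2,
      raw8 P a1 a2 b1 _ ha (hb.trans (P.α_op _ _ _ _ _).symm) e1]
    exact congrArg Arr.bb (congrArg (Quot.mk _) (Subtype.ext (congrArg (Prod.mk a1)
      (op_assoc P a2 b1 b2 c1 c2 e1 hb e2 hc (e2.trans (P.β_op _ _ _ _ _).symm)
        (hb.trans (P.α_op _ _ _ _ _).symm)))))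
  -- (bb, bb, ba)
  · induction cf using Quot.ind with | _ p => ?_
    induction cg using Quot.ind with | _ q => ?_
    obtain ⟨⟨a1, a2⟩, ha⟩ := p
    obtain ⟨⟨b1, b2⟩, hb⟩ := q
    have e1 : P.β b1 = P.β a2 := (Sum.inr.inj hfg).symm
    have e2 : P.β xc = P.β b2 := (Sum.inr.inj hgh).symm
    rw [raw8 P a1 a2 b1 b2 ha hb e1,
      raw7 P xc _ a1 _ ((P.β_op _ _ _ _ _).trans e2.symm),
      raw7 P xc b2 b1 hb e2.symm,
      raw7 P _ a2 a1 ha (e1.symm.trans (P.β_op _ _ _ _ _).symm)]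
    refine congrArg Arr.ba ?_
    refine ((op_iv P xc b2 b1 a2 a1 e1.symm ha.symm hb e2.symm
      (hb.symm.trans (P.α_op _ _ _ _ _).symm) ((P.β_op _ _ _ _ _).trans e2.symm)
      ((P.α_op _ _ _ _ _).trans ha.symm)).symm).trans ?_
    exact (op_assoc P xc b2 b1 a2 a1 e2.symm hb.symm e1.symm ha.symm
      (e1.symm.trans (P.β_op _ _ _ _ _).symm)
      (hb.symm.trans (P.α_op _ _ _ _ _).symm)).symm
  -- (bb, ba, aa)
  · induction cf using Quot.ind with | _ p => ?_
    induction ch using Quot.ind with | _ r => ?_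
    obtain ⟨⟨a1, a2⟩, ha⟩ := p
    obtain ⟨⟨c1, c2⟩, hc⟩ := r
    have e1 : P.β xb = P.β a2 := (Sum.inr.inj hfg).symm
    have e2 : P.α c2 = P.α xb := (Sum.inl.inj hgh).symm
    rw [raw7 P xb a2 a1 ha e1.symm,
      raw5 P c1 c2 _ hc (e2.trans (P.α_op _ _ _ _ _).symm),
      raw5 P c1 c2 xb hc e2,
      raw7 P _ a2 a1 ha (e1.symm.trans (P.β_op _ _ _ _ _).symm)]
    exact congrArg Arr.ba
      (op_assoc P c1 c2 xb a2 a1 hc.symm e2 e1.symm ha.symm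
        (e1.symm.trans (P.β_op _ _ _ _ _).symm)
        (e2.trans (P.α_op _ _ _ _ _).symm)).symm
  -- (bb, ba, ab)
  · induction cf using Quot.ind with | _ p => ?_
    obtain ⟨⟨a1, a2⟩, ha⟩ := p
    have e1 : P.β xb = P.β a2 := (Sum.inr.inj hfg).symm
    have e2 : P.α xb = P.α xc := Sum.inl.inj hgh
    rw [raw7 P xb a2 a1 ha e1.symm,
      raw6 P _ xc ((P.α_op _ _ _ _ _).trans e2),
      raw6 P xb xc e2, raw8 P a1 a2 xb xc ha e2 e1]
    exact congrArg Arr.bb (Quot.sound ⟨P.β_op _ _ _ _ _,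
      (op_ii P xb a2 a1 xc e1.symm ha.symm e2 (P.β_op _ _ _ _ _)
        ((P.α_op _ _ _ _ _).trans e2)).symm⟩)
  -- (ab, bb, bb)
  · induction cg using Quot.ind with | _ q => ?_
    induction ch using Quot.ind with | _ r => ?_
    obtain ⟨⟨b1, b2⟩, hb⟩ := q
    obtain ⟨⟨c1, c2⟩, hc⟩ := r
    have e1 : P.β b1 = P.β xa := (Sum.inr.inj hfg).symm
    have e2 : P.β c1 = P.β b2 := (Sum.inr.inj hgh).symm
    rw [raw4 P xa b1 b2 e1 hb,
      raw4 P _ c1 c2 (e2.trans (P.β_op _ _ _ _ _).symm) hc,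
      raw8 P b1 b2 c1 c2 hb hc e2,
      raw4 P xa b1 _ e1 (hb.trans (P.α_op _ _ _ _ _).symm)]
    exact congrArg Arr.ab
      (op_assoc P xa b1 b2 c1 c2 e1 hb e2 hc (e2.trans (P.β_op _ _ _ _ _).symm)
        (hb.trans (P.α_op _ _ _ _ _).symm))
  -- (ab, bb, ba)
  · induction cg using Quot.ind with | _ q => ?_
    obtain ⟨⟨b1, b2⟩, hb⟩ := q
    have e1 : P.β b1 = P.β xa := (Sum.inr.inj hfg).symm
    have e2 : P.β xc = P.β b2 := (Sum.inr.inj hgh).symm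
    rw [raw4 P xa b1 b2 e1 hb,
      raw3 P _ xc (e2.trans (P.β_op _ _ _ _ _).symm),
      raw7 P xc b2 b1 hb e2.symm,
      raw3 P xa _ ((P.β_op _ _ _ _ _).trans e1)]
    have hG : P.op b2 xc (P.op xc b2 b1 e2.symm hb.symm) e2 (P.α_op _ _ _ _ _).symm
        = b1 :=
      (P.G1 b2 xc b2 b1 e2.symm hb.symm e2 (P.α_op _ _ _ _ _).symm rfl).trans
        (P.U1 b2 b1 rfl hb.symm)
    refine congrArg Arr.aa (Quot.sound ⟨(P.α_op _ _ _ _ _).symm, ?_⟩)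
    refine ((op_assoc P xa b1 b2 xc (P.op xc b2 b1 e2.symm hb.symm) e1 hb e2
      (P.α_op _ _ _ _ _).symm (e2.trans (P.β_op _ _ _ _ _).symm)
      (hb.trans (P.α_op _ _ _ _ _).symm)).trans
      (((op_congr P rfl rfl hG e1 (hb.trans (P.α_op _ _ _ _ _).symm) e1 rfl).trans
        (P.U2 xa b1 e1 rfl)))).symm
  -- (ab, ba, aa)
  · induction ch using Quot.ind with | _ r => ?_
    obtain ⟨⟨c1, c2⟩, hc⟩ := r
    have e1 : P.β xb = P.β xa := (Sum.inr.inj hfg).symm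
    have e2 : P.α c2 = P.α xb := (Sum.inl.inj hgh).symm
    rw [raw3 P xa xb e1, raw1 P xa xb c2 c1 e1 hc e2.symm,
      raw5 P c1 c2 xb hc e2,
      raw3 P xa _ ((P.β_op _ _ _ _ _).trans e1)]
    have hG : P.op c2 c1 (P.op c1 c2 xb hc.symm e2) hc (P.α_op _ _ _ _ _).symm
        = xb :=
      (P.G1 c2 c1 c2 xb hc.symm e2 hc (P.α_op _ _ _ _ _).symm rfl).trans
        (P.U1 c2 xb rfl e2)
    refine congrArg Arr.aa (Quot.sound ⟨(P.α_op _ _ _ _ _).symm, ?_⟩)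
    refine ((op_assoc P xa xb c2 c1 (P.op c1 c2 xb hc.symm e2) e1 e2.symm hc
      (P.α_op _ _ _ _ _).symm (hc.trans (P.β_op _ _ _ _ _).symm)
      (e2.symm.trans (P.α_op _ _ _ _ _).symm)).trans
      (((op_congr P rfl rfl hG e1 (e2.symm.trans (P.α_op _ _ _ _ _).symm) e1
        rfl).trans
        (P.U2 xa xb e1 rfl)))).symm
  -- (ab, ba, ab)
  · have e1 : P.β xb = P.β xa := (Sum.inr.inj hfg).symm
    have e2 : P.α xb = P.α xc := Sum.inl.inj hgh
    rw [raw3 P xa xb e1, raw2 P xa xb xc e1 e2,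
      raw6 P xb xc e2, raw4 P xa xb xc e1 e2]
  -- (ba, aa, aa)
  · induction cg using Quot.ind with | _ q => ?_
    induction ch using Quot.ind with | _ r => ?_
    obtain ⟨⟨b1, b2⟩, hb⟩ := q
    obtain ⟨⟨c1, c2⟩, hc⟩ := r
    have e1 : P.α b2 = P.α xa := (Sum.inl.inj hfg).symm
    have e2 : P.α b1 = P.α c2 := Sum.inl.inj hgh
    rw [raw5 P b1 b2 xa hb e1,
      raw5 P c1 c2 _ hc (e2.symm.trans (P.α_op _ _ _ _ _).symm),
      raw1 P b2 b1 c2 c1 hb hc e2,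
      raw5 P c1 _ xa _ ((P.α_op _ _ _ _ _).trans e1)]
    exact congrArg Arr.ba
      (op_iv P c1 c2 b1 b2 xa hb.symm e1 e2 hc.symm
        (e2.symm.trans (P.α_op _ _ _ _ _).symm)
        ((P.β_op _ _ _ _ _).trans hc.symm) ((P.α_op _ _ _ _ _).trans e1))
  -- (ba, aa, ab)
  · induction cg using Quot.ind with | _ q => ?_
    obtain ⟨⟨b1, b2⟩, hb⟩ := q
    have e1 : P.α b2 = P.α xa := (Sum.inl.inj hfg).symm
    have e2 : P.α b1 = P.α xc := Sum.inl.inj hgh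
    rw [raw5 P b1 b2 xa hb e1,
      raw6 P _ xc ((P.α_op _ _ _ _ _).trans e2),
      raw2 P b2 b1 xc hb e2,
      raw6 P xa _ (e1.symm.trans (P.α_op _ _ _ _ _).symm)]
    exact congrArg Arr.bb (Quot.sound ⟨P.β_op _ _ _ _ _,
      (op_ii P b1 b2 xa xc hb.symm e1 e2 (P.β_op _ _ _ _ _)
        ((P.α_op _ _ _ _ _).trans e2)).symm⟩)
  -- (ba, ab, bb)
  · induction ch using Quot.ind with | _ r => ?_
    obtain ⟨⟨c1, c2⟩, hc⟩ := r
    have e1 : P.α xa = P.α xb := Sum.inl.inj hfg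
    have e2 : P.β c1 = P.β xb := (Sum.inr.inj hgh).symm
    rw [raw6 P xa xb e1, raw8 P xa xb c1 c2 e1 hc e2,
      raw4 P xb c1 c2 e2 hc,
      raw6 P xa _ (e1.trans (P.α_op _ _ _ _ _).symm)]
  -- (ba, ab, ba)
  · have e1 : P.α xa = P.α xb := Sum.inl.inj hfg
    have e2 : P.β xc = P.β xb := (Sum.inr.inj hgh).symm
    rw [raw6 P xa xb e1, raw7 P xc xb xa e1 e2.symm,
      raw3 P xb xc e2, raw5 P xc xb xa e2 e1.symm]

/-- The groupoid structure on the hom-sets of the enveloping groupoid. -/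
def envStr : GroupoidStructure (EnvHom P) where
  ident a := ⟨identArr P a, d0_identArr P a, d1_identArr P a⟩
  comp f g := envComp P f g
  inv f := ⟨rawInv P f.1, (d0_rawInv P f.1).trans f.2.2, (d1_rawInv P f.1).trans f.2.1⟩
  id_comp f := by
    obtain ⟨g, hg0, hg1⟩ := f
    subst hg0; subst hg1
    exact Subtype.ext (raw_id_left P g)
  comp_id f := by
    obtain ⟨g, hg0, hg1⟩ := f
    subst hg0; subst hg1
    exact Subtype.ext (raw_id_right P g)
  assoc f g h := Subtype.ext
    (raw_assoc P f.1 g.1 h.1 (f.2.2.trans g.2.1.symm) (g.2.2.trans h.2.1.symm))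
  inv_comp f := by
    obtain ⟨g, hg0, hg1⟩ := f
    subst hg0; subst hg1
    exact Subtype.ext (raw_inv_left P g)
  comp_inv f := by
    obtain ⟨g, hg0, hg1⟩ := f
    subst hg0; subst hg1
    exact Subtype.ext (raw_inv_right P g)

end EnvelopingProof


/-- The enveloping groupoid `X⁺` of a pregroupoid `X` on
`A`, `B` is a well-defined groupoid: on the object set `A ⊔ B`, with hom-sets
built from `XX⁻¹`, `X⁻¹X`, `X` and `X⁻¹`, there is a groupoid structure
(composition well defined on equivalence classes, associative, with identities
`xx⁻¹` at `α x` and `x⁻¹x` at `β x`, and with every arrow invertible) whose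
composition is given by the multiplication table. -/
theorem enveloping_groupoid_exists {A B X : Type*} (P : Pregroupoid A B X) :
    ∃ str : GroupoidStructure (EnvHom P), TableSpec P str := by
  refine ⟨envStr P, ?_, ?_, ?_, ?_, ?_, ?_, ?_, ?_, ?_, ?_⟩
  · intro a b c f g x1 x2 x3 x4 h12 h34 h23 hu hf hg
    show rawComp P f.1 g.1 = _
    rw [hf, hg]
    exact raw1 P x1 x2 x3 x4 h12 h34 h23
  · intro a b c f g x1 x2 x3 h12 h23 hf hg
    show rawComp P f.1 g.1 = _
    rw [hf, hg]
    exact raw2 P x1 x2 x3 h12 h23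
  · intro a b c f g x1 x2 h hf hg
    show rawComp P f.1 g.1 = _
    rw [hf, hg]
    exact raw3 P x1 x2 h
  · intro a b c f g x1 x2 x3 h12 h23 hf hg
    show rawComp P f.1 g.1 = _
    rw [hf, hg]
    exact raw4 P x1 x2 x3 h12 h23
  · intro a b c f g x1 x2 x3 h12 h23 hf hg
    show rawComp P f.1 g.1 = _
    rw [hf, hg]
    exact raw5 P x1 x2 x3 h12.symm h23
  · intro a b c f g x2 x3 h23 hf hg
    show rawComp P f.1 g.1 = _
    rw [hf, hg]
    exact raw6 P x2 x3 h23
  · intro a b c f g x1 x2 x3 h12 h23 hf hg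
    show rawComp P f.1 g.1 = _
    rw [hf, hg]
    exact raw7 P x1 x2 x3 h23.symm h12
  · intro a b c f g x2 x3 x4 x5 h23 h43 h45 hq hf hg
    show rawComp P f.1 g.1 = _
    rw [hf, hg]
    exact raw8 P x2 x3 x4 x5 h23 h45 h43
  · intro x a ha
    subst ha
    exact identArr_aa P x
  · intro x b hb
    subst hb
    exact identArr_bb P x

end Kock
end

section
/- The associativity case BAAA holds: in any pregroupoid, (x₆x₅⁻¹(x₄x₃⁻¹x₂)) determines the same element as (x₆(x₃x₄⁻¹x₅)⁻¹x₂); hence in the enveloping groupoid, (x₂⁻¹ ∘ x₃x₄⁻¹) ∘ x₅x₆⁻¹ = x₂⁻¹ ∘ (x₃x₄⁻¹ ∘ x₅x₆⁻¹) whenever defined. -/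
namespace Kock

/-- The op only depends on its first (element) argument up to equality;
the proof arguments are irrelevant. -/
theorem op_congr_fst {A B X : Type*} (P : Pregroupoid A B X) {y y' x z : X}
    (h : y = y') (h1 : P.β x = P.β y) (h2 : P.α x = P.α z)
    (h1' : P.β x = P.β y') : P.op y x z h1 h2 = P.op y' x z h1' h2 := by
  subst h; rfl

/-- The op only depends on its third (element) argument up to equality. -/
theorem op_congr_thd {A B X : Type*} (P : Pregroupoid A B X) {y x z z' : X}
    (h : z = z') (h1 : P.β x = P.β y) (h2 : P.α x = P.α z)
    (h2' : P.α x = P.α z') : P.op y x z h1 h2 = P.op y x z' h1 h2' := by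
  subst h; rfl

/-- The associativity case `BAAA` for the enveloping
groupoid: `x₆x₅⁻¹(x₄x₃⁻¹x₂)` and `x₆(x₃x₄⁻¹x₅)⁻¹x₂` determine the same element
of `X`; hence, by the multiplication table of the enveloping groupoid,
`(x₂⁻¹ ∘ x₃x₄⁻¹) ∘ x₅x₆⁻¹ = x₂⁻¹ ∘ (x₃x₄⁻¹ ∘ x₅x₆⁻¹)` whenever defined, both
sides being the formal inverse of this common element. -/
theorem env_assoc_case_BAAA {A B X : Type*} (P : Pregroupoid A B X)
    (x2 x3 x4 x5 x6 : X)
    (h34 : P.β x3 = P.β x4) (h32 : P.α x3 = P.α x2) (h45 : P.α x4 = P.α x5)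
    (h56 : P.β x5 = P.β x6)
    (ha : P.α x5 = P.α (P.op x4 x3 x2 h34 h32))
    (hb : P.β (P.op x3 x4 x5 h34.symm h45) = P.β x6)
    (hc : P.α (P.op x3 x4 x5 h34.symm h45) = P.α x2) :
    P.op x6 x5 (P.op x4 x3 x2 h34 h32) h56 ha
      = P.op x6 (P.op x3 x4 x5 h34.symm h45) x2 hb hc := by
  have hαw : P.α x3 = P.α (P.op x3 x4 x5 h34.symm h45) :=
    (P.α_op x3 x4 x5 h34.symm h45).symm
  -- x5 = x4 x3⁻¹ w
  have e1 : P.op x4 x3 (P.op x3 x4 x5 h34.symm h45) h34 hαw = x5 :=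
    (P.G1 x4 x3 x4 x5 h34.symm h45 h34 hαw rfl).trans (P.U1 x4 x5 rfl h45)
  -- x5 w⁻¹ x2 = x4 x3⁻¹ x2
  have e2 : P.op x5 (P.op x3 x4 x5 h34.symm h45) x2
      (P.β_op x3 x4 x5 h34.symm h45) hc = P.op x4 x3 x2 h34 h32 :=
    (op_congr_fst P e1.symm _ hc
        ((P.β_op x3 x4 x5 h34.symm h45).trans (congrArg P.β e1.symm))).trans
      (P.G2 x4 x3 (P.op x3 x4 x5 h34.symm h45) x2 h34 hαw
        ((P.β_op x3 x4 x5 h34.symm h45).trans (congrArg P.β e1.symm)) hc h32)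
  calc P.op x6 x5 (P.op x4 x3 x2 h34 h32) h56 ha
      = P.op x6 x5 (P.op x5 (P.op x3 x4 x5 h34.symm h45) x2
          (P.β_op x3 x4 x5 h34.symm h45) hc) h56
          (ha.trans (congrArg P.α e2.symm)) :=
        op_congr_thd P e2.symm h56 ha _
    _ = P.op x6 (P.op x3 x4 x5 h34.symm h45) x2 hb hc :=
        P.G1 x6 x5 (P.op x3 x4 x5 h34.symm h45) x2 _ hc h56 _ hb

end Kock
end

section
/- Let a groupoid G with object set A act on the left on a surjection α : X → A making X a G-torsor with orbit quotient β : X → B. Define yx⁻¹z := (yx⁻¹)·z where yx⁻¹ is the unique g ∈ G with g·x = y (for β(x)=β(y)) and α(x)=α(z). Then this ternary operation makes (A ← X → B) into a pregroupoid: it satisfies the correct book-keeping (α(yx⁻¹z)=α(y), β(yx⁻¹z)=β(z)) and the four axioms xx⁻¹z=z, yx⁻¹x=y, vy⁻¹(yx⁻¹z)=vx⁻¹z, (yx⁻¹z)z⁻¹w=yx⁻¹w. -/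
namespace Kock

open CategoryTheory in
/-- A left torsor structure: a groupoid with object type `G` acting on the left
on a surjection `α : X → G`, freely, with orbit quotient `β : X → B`
(the action groupoid is the equivalence relation of having equal `β`).
`smul g x h` is `g · x`, defined when `α x` is the codomain of `g`. -/
structure LeftTorsor (G : Type*) [Groupoid G] (B X : Type*) where
  α : X → G
  β : X → B
  nonempty : Nonempty X
  α_surj : Function.Surjective α
  β_surj : Function.Surjective β
  smul : ∀ {a b : G}, (a ⟶ b) → ∀ x : X, α x = b → X
  α_smul : ∀ {a b : G} (g : a ⟶ b) (x : X) (h : α x = b), α (smul g x h) = a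
  id_smul : ∀ (a : G) (x : X) (h : α x = a), smul (𝟙 a) x h = x
  comp_smul : ∀ {a b c : G} (g : a ⟶ b) (g' : b ⟶ c) (x : X) (h : α x = c)
      (h' : α (smul g' x h) = b), smul g (smul g' x h) h' = smul (g ≫ g') x h
  free : ∀ {a a' b : G} (g : a ⟶ b) (g' : a' ⟶ b) (x : X) (h h' : α x = b),
      smul g x h = smul g' x h' → a = a' ∧ HEq g g'
  orbit : ∀ x y : X, β x = β y ↔
      ∃ (a b : G) (g : a ⟶ b) (h : α x = b), smul g x h = y

open CategoryTheory in
lemma LeftTorsor.smul_congr {G B X : Type*} [Groupoid G] (T : LeftTorsor G B X)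
    {a b : G} (g : a ⟶ b) (x x' : X) (h : T.α x = b) (h' : T.α x' = b)
    (hxx : x = x') : T.smul g x h = T.smul g x' h' := by subst hxx; rfl

open CategoryTheory in
/-- For a `G`-torsor `α : X → A` with orbit quotient
`β : X → B`, the operation `yx⁻¹z := (yx⁻¹)·z`, where `yx⁻¹` is the unique
`g ∈ G` with `g·x = y`, makes `A ← X → B` a pregroupoid: it has the correct
book-keeping and satisfies the four pregroupoid axioms. -/
theorem torsor_to_pregroupoid {G B X : Type*} [Groupoid G]
    (T : LeftTorsor G B X)
    (op : (y x z : X) → T.β x = T.β y → T.α x = T.α z → X)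
    (hop : ∀ (y x z : X) (h1 : T.β x = T.β y) (h2 : T.α x = T.α z)
      {a b : G} (g : a ⟶ b) (hx : T.α x = b), T.smul g x hx = y →
      op y x z h1 h2 = T.smul g z (h2.symm.trans hx)) :
    (∀ (y x z : X) (h1 : T.β x = T.β y) (h2 : T.α x = T.α z),
      T.α (op y x z h1 h2) = T.α y) ∧
    (∀ (y x z : X) (h1 : T.β x = T.β y) (h2 : T.α x = T.α z),
      T.β (op y x z h1 h2) = T.β z) ∧
    (∀ (x z : X) (h1 : T.β x = T.β x) (h2 : T.α x = T.α z),
      op x x z h1 h2 = z) ∧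
    (∀ (y x : X) (h1 : T.β x = T.β y) (h2 : T.α x = T.α x),
      op y x x h1 h2 = y) ∧
    (∀ (v y x z : X) (h1 : T.β x = T.β y) (h2 : T.α x = T.α z)
      (h3 : T.β y = T.β v) (h4 : T.α y = T.α (op y x z h1 h2))
      (h5 : T.β x = T.β v),
      op v y (op y x z h1 h2) h3 h4 = op v x z h5 h2) ∧
    (∀ (y x z w : X) (h1 : T.β x = T.β y) (h2 : T.α x = T.α z)
      (h3 : T.β z = T.β (op y x z h1 h2)) (h4 : T.α z = T.α w)
      (h5 : T.α x = T.α w),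
      op (op y x z h1 h2) z w h3 h4 = op y x w h1 h5) := by
  constructor
  · intro y x z h1 h2
    obtain ⟨a, b, g, hx, hgxy⟩ := (T.orbit x y).mp h1
    rw [hop y x z h1 h2 g hx hgxy, T.α_smul, ← hgxy, T.α_smul]
  constructor
  · intro y x z h1 h2
    obtain ⟨a, b, g, hx, hgxy⟩ := (T.orbit x y).mp h1
    rw [hop y x z h1 h2 g hx hgxy]
    exact ((T.orbit z _).mpr ⟨a, b, g, _, rfl⟩).symm
  constructor
  · intro x z h1 h2
    rw [hop x x z h1 h2 (𝟙 (T.α x)) rfl (T.id_smul _ x rfl)]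
    exact T.id_smul _ z h2.symm
  constructor
  · intro y x h1 h2
    obtain ⟨a, b, g, hx, hgxy⟩ := (T.orbit x y).mp h1
    rw [hop y x x h1 h2 g hx hgxy]
    exact hgxy
  constructor
  · intro v y x z h1 h2 h3 h4 h5
    obtain ⟨a, b, g, hx, hgxy⟩ := (T.orbit x y).mp h1
    obtain ⟨a', b', g', hy, hg'yv⟩ := (T.orbit y v).mp h3
    have hya : T.α y = a := by rw [← hgxy, T.α_smul]
    obtain rfl : b' = a := hy.symm.trans hya
    have hwit : T.smul (g' ≫ g) x hx = v := by
      rw [← T.comp_smul g' g x hx (by rw [T.α_smul])]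
      rw [T.smul_congr g' _ y _ hy hgxy]
      exact hg'yv
    rw [hop v y (op y x z h1 h2) h3 h4 g' hy hg'yv,
        hop v x z h5 h2 (g' ≫ g) hx hwit,
        T.smul_congr g' (op y x z h1 h2) (T.smul g z (h2.symm.trans hx))
          (h4.symm.trans hy) (by rw [T.α_smul]) (hop y x z h1 h2 g hx hgxy),
        T.comp_smul]
  · intro y x z w h1 h2 h3 h4 h5
    obtain ⟨a, b, g, hx, hgxy⟩ := (T.orbit x y).mp h1
    rw [hop (op y x z h1 h2) z w h3 h4 g (h2.symm.trans hx)
          (hop y x z h1 h2 g hx hgxy).symm,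
        hop y x w h1 h5 g hx hgxy]


end Kock
end
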